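/- Fix an agent i whose endowment satisfies 0 < ω_{ij} ≤ 1 for every good j. For λ ∈ ℝⁿ with λ ≥ 0 and α ≥ 0, define the budget set C_i(λ, α) := {y ∈ Δⁿ₋ : p(λ) · y ≤ p(λ) · ω_i + α}. Suppose λ^t → λ in {λ ∈ ℝⁿ : λ ≥ 0}, α^t → α with α^t, α ≥ 0, and p(λ) ≠ 0. Then lim_{t→∞} max{u_i · y : y ∈ C_i(λ^t, α^t)} = max{u_i · y : y ∈ C_i(λ, α)}. -/

import Mathlib

open Finset

/-- Dot product of two vectors in `ℝⁿ`. -/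
def dotp {n : ℕ} (a b : Fin n → ℝ) : ℝ := ∑ j, a j * b j

/-- Membership in `Δⁿ₋`: nonnegative with coordinate sum at most 1. -/
def InSimplexLe {n : ℕ} (y : Fin n → ℝ) : Prop := (∀ j, 0 ≤ y j) ∧ ∑ j, y j ≤ 1

/-- The set `M` of allocations: nonnegative doubly stochastic matrices. -/
def IsAlloc {n : ℕ} (x : Fin n → Fin n → ℝ) : Prop :=
  (∀ i j, 0 ≤ x i j) ∧ (∀ i, ∑ j, x i j = 1) ∧ (∀ j, ∑ i, x i j = 1)

/-- The feasible set for the relaxed welfare problem where the supply of good `l`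
is doubled. -/
def FeasRelax {n : ℕ} (l : Fin n) (x : Fin n → Fin n → ℝ) : Prop :=
  (∀ i j, 0 ≤ x i j) ∧ (∀ i, ∑ j, x i j ≤ 1) ∧
  (∀ j, j ≠ l → ∑ i, x i j ≤ 1) ∧ (∑ i, x i l ≤ 2)

/-- `W(λ)`: the maximum weighted welfare over allocations. -/
noncomputable def Wval {n : ℕ} (u : Fin n → Fin n → ℝ) (lam : Fin n → ℝ) : ℝ :=
  sSup ((fun x => ∑ i, lam i * dotp (u i) (x i)) '' {x | IsAlloc x})

/-- `W_l(λ)`: the maximum weighted welfare when the supply of good `l` is doubled. -/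
noncomputable def Wrelax {n : ℕ} (u : Fin n → Fin n → ℝ) (lam : Fin n → ℝ)
    (l : Fin n) : ℝ :=
  sSup ((fun x => ∑ i, lam i * dotp (u i) (x i)) '' {x | FeasRelax l x})

/-- The VCG price vector `p(λ)`, with `p_l(λ) = W_l(λ) − W(λ)`. -/
noncomputable def vcg {n : ℕ} (u : Fin n → Fin n → ℝ) (lam : Fin n → ℝ) :
    Fin n → ℝ :=
  fun l => Wrelax u lam l - Wval u lam

/-- The maximal utility of agent `i` over the budget set
`C_i(λ, α) = {y ∈ Δⁿ₋ : p(λ) · y ≤ p(λ) · ω_i + α}`. -/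
noncomputable def optVal {n : ℕ} (u : Fin n → Fin n → ℝ) (i : Fin n)
    (ωi : Fin n → ℝ) (lam : Fin n → ℝ) (a : ℝ) : ℝ :=
  sSup {v | ∃ y : Fin n → ℝ, InSimplexLe y ∧
            dotp (vcg u lam) y ≤ dotp (vcg u lam) ωi + a ∧
            v = dotp (u i) y}

-- Auxiliary lemmas

section Aux
variable {n : ℕ}

lemma dotp_nonneg {a b : Fin n → ℝ} (ha : ∀ j, 0 ≤ a j) (hb : ∀ j, 0 ≤ b j) :
    0 ≤ dotp a b :=
  Finset.sum_nonneg fun j _ => mul_nonneg (ha j) (hb j)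

lemma simplex_coord_le_one {y : Fin n → ℝ} (hy : InSimplexLe y) (j : Fin n) : y j ≤ 1 := by
  have h := Finset.single_le_sum (f := y) (fun k _ => hy.1 k) (Finset.mem_univ j)
  linarith [hy.2]

lemma dotp_le_sum_abs {p y : Fin n → ℝ} (hy : InSimplexLe y) : dotp p y ≤ ∑ j, |p j| := by
  apply Finset.sum_le_sum; intro j _
  calc p j * y j ≤ |p j| * y j := mul_le_mul_of_nonneg_right (le_abs_self _) (hy.1 j)
    _ ≤ |p j| * 1 := mul_le_mul_of_nonneg_left (simplex_coord_le_one hy j) (abs_nonneg _)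
    _ = |p j| := mul_one _

lemma dotp_sub (p q y : Fin n → ℝ) : dotp p y - dotp q y = dotp (fun j => p j - q j) y := by
  simp [dotp, sub_mul, Finset.sum_sub_distrib]

lemma dotp_diff_le {p q : Fin n → ℝ} {y : Fin n → ℝ} (hy : InSimplexLe y) :
    dotp p y ≤ dotp q y + ∑ j, |p j - q j| := by
  have h := dotp_le_sum_abs (p := fun j => p j - q j) hy
  have h2 := dotp_sub p q y
  linarith

lemma dotp_val_bounds {u : Fin n → Fin n → ℝ} (hu : ∀ i j, 0 ≤ u i j)
    {x : Fin n → Fin n → ℝ} (hx : ∀ k, InSimplexLe (x k)) (k : Fin n) :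
    0 ≤ dotp (u k) (x k) ∧ dotp (u k) (x k) ≤ ∑ j, u k j := by
  constructor
  · exact dotp_nonneg (hu k) (hx k).1
  · calc dotp (u k) (x k) ≤ ∑ j, |u k j| := dotp_le_sum_abs (hx k)
      _ = ∑ j, u k j := Finset.sum_congr rfl fun j _ => abs_of_nonneg (hu k j)

/-- identity matrix -/
def idm (n : ℕ) : Fin n → Fin n → ℝ := fun i j => if i = j then 1 else 0

lemma idm_alloc : IsAlloc (idm n) := by
  refine ⟨fun i j => by unfold idm; positivity, fun i => by simp [idm], fun j => by simp [idm]⟩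

lemma alloc_rows {x : Fin n → Fin n → ℝ} (hx : IsAlloc x) (k : Fin n) : InSimplexLe (x k) :=
  ⟨hx.1 k, le_of_eq (hx.2.1 k)⟩

lemma relax_rows {l : Fin n} {x : Fin n → Fin n → ℝ} (hx : FeasRelax l x) (k : Fin n) :
    InSimplexLe (x k) := ⟨hx.1 k, hx.2.1 k⟩

lemma alloc_relax {l : Fin n} {x : Fin n → Fin n → ℝ} (hx : IsAlloc x) : FeasRelax l x :=
  ⟨hx.1, fun k => le_of_eq (hx.2.1 k), fun j _ => le_of_eq (hx.2.2 j),
    by rw [hx.2.2 l]; norm_num⟩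

noncomputable def Phi (u : Fin n → Fin n → ℝ) (lam : Fin n → ℝ)
    (x : Fin n → Fin n → ℝ) : ℝ := ∑ k, lam k * dotp (u k) (x k)

lemma Phi_le {u : Fin n → Fin n → ℝ} (hu : ∀ i j, 0 ≤ u i j) {lam : Fin n → ℝ}
    (hlam : ∀ k, 0 ≤ lam k) {x : Fin n → Fin n → ℝ} (hx : ∀ k, InSimplexLe (x k)) :
    Phi u lam x ≤ ∑ k, lam k * (∑ j, u k j) :=
  Finset.sum_le_sum fun k _ =>
    mul_le_mul_of_nonneg_left (dotp_val_bounds hu hx k).2 (hlam k)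

lemma bddAbove_img {u : Fin n → Fin n → ℝ} (hu : ∀ i j, 0 ≤ u i j) {lam : Fin n → ℝ}
    (hlam : ∀ k, 0 ≤ lam k) {S : Set (Fin n → Fin n → ℝ)}
    (hS : ∀ x ∈ S, ∀ k, InSimplexLe (x k)) :
    BddAbove (Phi u lam '' S) := by
  refine ⟨∑ k, lam k * (∑ j, u k j), ?_⟩
  rintro v ⟨x, hx, rfl⟩
  exact Phi_le hu hlam (hS x hx)

lemma sup_lip {u : Fin n → Fin n → ℝ} (hu : ∀ i j, 0 ≤ u i j) {lam lam' : Fin n → ℝ}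
    (hlam : ∀ k, 0 ≤ lam k) (hlam' : ∀ k, 0 ≤ lam' k) {S : Set (Fin n → Fin n → ℝ)}
    (hS : ∀ x ∈ S, ∀ k, InSimplexLe (x k)) (hne : S.Nonempty) :
    sSup (Phi u lam '' S) ≤ sSup (Phi u lam' '' S) + ∑ k, |lam k - lam' k| * (∑ j, u k j) := by
  apply csSup_le (hne.image _)
  rintro v ⟨x, hxS, rfl⟩
  have h1 : Phi u lam' x ≤ sSup (Phi u lam' '' S) :=
    le_csSup (bddAbove_img hu hlam' hS) ⟨x, hxS, rfl⟩
  have h2 : Phi u lam x - Phi u lam' x ≤ ∑ k, |lam k - lam' k| * (∑ j, u k j) := by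
    have : Phi u lam x - Phi u lam' x = ∑ k, (lam k - lam' k) * dotp (u k) (x k) := by
      simp [Phi, sub_mul, Finset.sum_sub_distrib]
    rw [this]
    apply Finset.sum_le_sum
    intro k _
    obtain ⟨hd0, hdC⟩ := dotp_val_bounds hu (hS x hxS) k
    calc (lam k - lam' k) * dotp (u k) (x k)
        ≤ |lam k - lam' k| * dotp (u k) (x k) :=
          mul_le_mul_of_nonneg_right (le_abs_self _) hd0
      _ ≤ |lam k - lam' k| * (∑ j, u k j) :=
          mul_le_mul_of_nonneg_left hdC (abs_nonneg _)
  linarith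

lemma Wval_eq (u : Fin n → Fin n → ℝ) (lam : Fin n → ℝ) :
    Wval u lam = sSup (Phi u lam '' {x | IsAlloc x}) := rfl

lemma Wrelax_eq (u : Fin n → Fin n → ℝ) (lam : Fin n → ℝ) (l : Fin n) :
    Wrelax u lam l = sSup (Phi u lam '' {x | FeasRelax l x}) := rfl

lemma alloc_set_nonempty : ({x | IsAlloc x} : Set (Fin n → Fin n → ℝ)).Nonempty :=
  ⟨idm n, idm_alloc⟩

lemma relax_set_nonempty (l : Fin n) : ({x | FeasRelax l x} : Set (Fin n → Fin n → ℝ)).Nonempty :=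
  ⟨idm n, alloc_relax idm_alloc⟩

lemma vcg_nonneg {u : Fin n → Fin n → ℝ} (hu : ∀ i j, 0 ≤ u i j) {lam : Fin n → ℝ}
    (hlam : ∀ k, 0 ≤ lam k) (l : Fin n) : 0 ≤ vcg u lam l := by
  have h : Wval u lam ≤ Wrelax u lam l := by
    rw [Wval_eq, Wrelax_eq]
    apply csSup_le_csSup (bddAbove_img hu hlam (fun x hx => relax_rows hx))
      (alloc_set_nonempty.image _)
    exact Set.image_mono (fun x hx => alloc_relax hx)
  simpa [vcg] using h

lemma vcg_abs_le {u : Fin n → Fin n → ℝ} (hu : ∀ i j, 0 ≤ u i j) {lam lam' : Fin n → ℝ}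
    (hlam : ∀ k, 0 ≤ lam k) (hlam' : ∀ k, 0 ≤ lam' k) (l : Fin n) :
    |vcg u lam l - vcg u lam' l| ≤ 2 * ∑ k, |lam k - lam' k| * (∑ j, u k j) := by
  have habs : ∀ k, |lam' k - lam k| = |lam k - lam' k| := fun k => abs_sub_comm _ _
  have hWa := sup_lip hu hlam hlam' (S := {x | IsAlloc x}) (fun x hx => alloc_rows hx)
    (alloc_set_nonempty)
  have hWa' := sup_lip hu hlam' hlam (S := {x | IsAlloc x}) (fun x hx => alloc_rows hx)
    (alloc_set_nonempty)
  have hWr := sup_lip hu hlam hlam' (S := {x | FeasRelax l x}) (fun x hx => relax_rows hx)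
    ((relax_set_nonempty l))
  have hWr' := sup_lip hu hlam' hlam (S := {x | FeasRelax l x}) (fun x hx => relax_rows hx)
    ((relax_set_nonempty l))
  simp only [habs] at hWa' hWr'
  rw [abs_le]
  constructor <;> · simp only [vcg, Wval_eq, Wrelax_eq] at *; linarith

end Aux

section VsetAux
variable {n : ℕ}

def Vset (u : Fin n → Fin n → ℝ) (i : Fin n) (q : Fin n → ℝ) (c : ℝ) : Set ℝ :=
  {v | ∃ y : Fin n → ℝ, InSimplexLe y ∧ dotp q y ≤ c ∧ v = dotp (u i) y}

lemma zero_simplex : InSimplexLe (fun _ : Fin n => (0:ℝ)) :=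
  ⟨fun _ => le_refl 0, by simp⟩

lemma zero_mem_Vset {u : Fin n → Fin n → ℝ} {i : Fin n} {q : Fin n → ℝ} {c : ℝ}
    (hc : 0 ≤ c) : (0:ℝ) ∈ Vset u i q c :=
  ⟨fun _ => 0, zero_simplex, by simpa [dotp] using hc, by simp [dotp]⟩

lemma Vset_nonempty {u : Fin n → Fin n → ℝ} {i : Fin n} {q : Fin n → ℝ} {c : ℝ}
    (hc : 0 ≤ c) : (Vset u i q c).Nonempty := ⟨0, zero_mem_Vset hc⟩

lemma Vset_bdd {u : Fin n → Fin n → ℝ} {i : Fin n} (hui : ∀ j, 0 ≤ u i j)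
    (q : Fin n → ℝ) (c : ℝ) : BddAbove (Vset u i q c) := by
  refine ⟨∑ j, u i j, ?_⟩
  rintro v ⟨y, hy, _, rfl⟩
  calc dotp (u i) y ≤ ∑ j, |u i j| := dotp_le_sum_abs hy
    _ = ∑ j, u i j := Finset.sum_congr rfl fun j _ => abs_of_nonneg (hui j)

lemma Vsup_nonneg {u : Fin n → Fin n → ℝ} {i : Fin n} (hui : ∀ j, 0 ≤ u i j)
    {q : Fin n → ℝ} {c : ℝ} (hc : 0 ≤ c) : 0 ≤ sSup (Vset u i q c) :=
  le_csSup (Vset_bdd hui q c) (zero_mem_Vset hc)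

lemma Vsup_le {u : Fin n → Fin n → ℝ} {i : Fin n} (hui : ∀ j, 0 ≤ u i j)
    {q : Fin n → ℝ} {c : ℝ} (hc : 0 ≤ c) : sSup (Vset u i q c) ≤ ∑ j, u i j := by
  apply csSup_le (Vset_nonempty hc)
  rintro v ⟨y, hy, _, rfl⟩
  calc dotp (u i) y ≤ ∑ j, |u i j| := dotp_le_sum_abs hy
    _ = ∑ j, u i j := Finset.sum_congr rfl fun j _ => abs_of_nonneg (hui j)

lemma Vsup_comp {u : Fin n → Fin n → ℝ} {i : Fin n} (hui : ∀ j, 0 ≤ u i j)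
    {q r : Fin n → ℝ} {c d ε : ℝ} (hc : 0 ≤ c) (hd : 0 < d) (hε : 0 ≤ ε)
    (h : ∀ y : Fin n → ℝ, InSimplexLe y → dotp q y ≤ c → dotp r y ≤ d + ε) :
    sSup (Vset u i q c) * d ≤ sSup (Vset u i r d) * (d + ε) := by
  have hdε : (0:ℝ) < d + ε := by linarith
  set S := sSup (Vset u i r d) with hS
  have key : sSup (Vset u i q c) ≤ S * ((d + ε) / d) := by
    apply csSup_le (Vset_nonempty hc)
    rintro v ⟨y, hy, hqy, rfl⟩
    set θ := d / (d + ε) with hθ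
    have hθ0 : 0 < θ := div_pos hd hdε
    have hθ1 : θ ≤ 1 := by rw [hθ, div_le_one hdε]; linarith
    have hy' : InSimplexLe (fun j => θ * y j) := by
      refine ⟨fun j => mul_nonneg hθ0.le (hy.1 j), ?_⟩
      rw [← Finset.mul_sum]
      calc θ * ∑ j, y j ≤ 1 * 1 :=
        mul_le_mul hθ1 hy.2 (Finset.sum_nonneg fun j _ => hy.1 j) zero_le_one
        _ = 1 := mul_one 1
    have hdotθ : ∀ w : Fin n → ℝ, dotp w (fun j => θ * y j) = θ * dotp w y := by
      intro w; simp only [dotp, Finset.mul_sum]; exact Finset.sum_congr rfl fun j _ => by ring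
    have hr' : dotp r (fun j => θ * y j) ≤ d := by
      rw [hdotθ]
      calc θ * dotp r y ≤ θ * (d + ε) :=
        mul_le_mul_of_nonneg_left (h y hy hqy) hθ0.le
        _ = d := by rw [hθ]; field_simp
    have hmem : θ * dotp (u i) y ∈ Vset u i r d :=
      ⟨fun j => θ * y j, hy', hr', (hdotθ (u i)).symm⟩
    have hle : θ * dotp (u i) y ≤ S := le_csSup (Vset_bdd hui r d) hmem
    have h1 : d * dotp (u i) y ≤ S * (d + ε) := by
      rw [hθ, div_mul_eq_mul_div] at hle
      exact (div_le_iff₀ hdε).mp hle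
    rw [mul_div_assoc'] at *
    rw [le_div_iff₀ hd]
    linarith
  calc sSup (Vset u i q c) * d ≤ S * ((d + ε) / d) * d :=
        mul_le_mul_of_nonneg_right key hd.le
    _ = S * (d + ε) := by field_simp

end VsetAux

set_option maxHeartbeats 1000000 in
/-- continuity of the optimal budget-constrained utility, provided
agent `i` has a strictly positive endowment and the limit prices are nonzero. -/
theorem opt_utility_continuous {n : ℕ} (hn : 0 < n) (u : Fin n → Fin n → ℝ)
    (hu : ∀ i j, 0 ≤ u i j)
    (i : Fin n) (ωi : Fin n → ℝ) (hωi : ∀ j, 0 < ωi j ∧ ωi j ≤ 1)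
    (lamSeq : ℕ → Fin n → ℝ) (lamLim : Fin n → ℝ)
    (aSeq : ℕ → ℝ) (aLim : ℝ)
    (hlamSeq : ∀ t i', 0 ≤ lamSeq t i') (hlamLim : ∀ i', 0 ≤ lamLim i')
    (haSeq : ∀ t, 0 ≤ aSeq t) (haLim : 0 ≤ aLim)
    (hlam : Filter.Tendsto lamSeq Filter.atTop (nhds lamLim))
    (ha : Filter.Tendsto aSeq Filter.atTop (nhds aLim))
    (hp : vcg u lamLim ≠ 0) :
    Filter.Tendsto (fun t => optVal u i ωi (lamSeq t) (aSeq t))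
      Filter.atTop (nhds (optVal u i ωi lamLim aLim)) := by
  classical
  have hui : ∀ j, 0 ≤ u i j := hu i
  set C : ℝ := ∑ j, u i j with hCdef
  have hC0 : 0 ≤ C := Finset.sum_nonneg fun j _ => hu i j
  set p : Fin n → ℝ := vcg u lamLim with hpdef
  set pt : ℕ → Fin n → ℝ := fun t => vcg u (lamSeq t) with hptdef
  have hpnn : ∀ l, 0 ≤ p l := fun l => vcg_nonneg hu hlamLim l
  have hptnn : ∀ t l, 0 ≤ pt t l := fun t l => vcg_nonneg hu (hlamSeq t) l
  set b : ℝ := dotp p ωi + aLim with hbdef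
  set bt : ℕ → ℝ := fun t => dotp (pt t) ωi + aSeq t with hbtdef
  have hbt0 : ∀ t, 0 ≤ bt t := fun t =>
    add_nonneg (dotp_nonneg (hptnn t) (fun j => (hωi j).1.le)) (haSeq t)
  have hb : 0 < b := by
    obtain ⟨l, hl⟩ := Function.ne_iff.mp hp
    have hl' : p l ≠ 0 := by simpa using hl
    have hpl : 0 < p l := lt_of_le_of_ne (hpnn l) (Ne.symm hl')
    have h1 : p l * ωi l ≤ dotp p ωi :=
      Finset.single_le_sum (f := fun j => p j * ωi j)
        (fun j _ => mul_nonneg (hpnn j) (hωi j).1.le) (Finset.mem_univ l)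
    have h2 : 0 < p l * ωi l := mul_pos hpl (hωi l).1
    have := haLim
    rw [hbdef]; linarith
  -- convergence facts
  have hsum0 : Filter.Tendsto (fun t => ∑ k, |lamSeq t k - lamLim k| * (∑ j, u k j))
      Filter.atTop (nhds 0) := by
    rw [show (0:ℝ) = ∑ _k : Fin n, (0:ℝ) by simp]
    apply tendsto_finset_sum
    intro k _
    have h1 : Filter.Tendsto (fun t => lamSeq t k) Filter.atTop (nhds (lamLim k)) :=
      (tendsto_pi_nhds.mp hlam) k
    have h2 : Filter.Tendsto (fun t => |lamSeq t k - lamLim k|) Filter.atTop (nhds 0) := by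
      simpa using (h1.sub_const (lamLim k)).abs
    simpa using h2.mul_const (∑ j, u k j)
  have hptconv : ∀ l, Filter.Tendsto (fun t => pt t l) Filter.atTop (nhds (p l)) := by
    intro l
    have hbnd : ∀ t, ‖pt t l - p l‖ ≤ 2 * ∑ k, |lamSeq t k - lamLim k| * (∑ j, u k j) :=
      fun t => vcg_abs_le hu (hlamSeq t) hlamLim l
    have h0 : Filter.Tendsto (fun t => pt t l - p l) Filter.atTop (nhds 0) :=
      squeeze_zero_norm hbnd (by simpa using hsum0.const_mul 2)
    simpa using h0.add_const (p l)
  have hdiffsum : Filter.Tendsto (fun t => ∑ l, |pt t l - p l|) Filter.atTop (nhds 0) := by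
    rw [show (0:ℝ) = ∑ _l : Fin n, (0:ℝ) by simp]
    apply tendsto_finset_sum
    intro l _
    simpa using ((hptconv l).sub_const (p l)).abs
  have hbtconv : Filter.Tendsto bt Filter.atTop (nhds b) := by
    have hdp : Filter.Tendsto (fun t => ∑ l, pt t l * ωi l) Filter.atTop
        (nhds (∑ l, p l * ωi l)) :=
      tendsto_finset_sum _ (fun l _ => (hptconv l).mul_const (ωi l))
    have : Filter.Tendsto (fun t => dotp (pt t) ωi) Filter.atTop (nhds (dotp p ωi)) := hdp
    simpa [hbtdef, hbdef] using this.add ha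
  set ε : ℕ → ℝ := fun t => |bt t - b| + ∑ l, |pt t l - p l| with hεdef
  have hε0 : ∀ t, 0 ≤ ε t := fun t =>
    add_nonneg (abs_nonneg _) (Finset.sum_nonneg fun l _ => abs_nonneg _)
  have hεconv : Filter.Tendsto ε Filter.atTop (nhds 0) := by
    have h1 : Filter.Tendsto (fun t => |bt t - b|) Filter.atTop (nhds 0) := by
      simpa using (hbtconv.sub_const b).abs
    simpa [hεdef] using h1.add hdiffsum
  -- the two scaled comparisons, valid for every t (resp. eventually)
  have hVform : optVal u i ωi lamLim aLim = sSup (Vset u i p b) := rfl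
  have hVtform : ∀ t, optVal u i ωi (lamSeq t) (aSeq t) = sSup (Vset u i (pt t) (bt t)) :=
    fun t => rfl
  set V : ℝ := sSup (Vset u i p b) with hVdef
  have hV0 : 0 ≤ V := Vsup_nonneg hui hb.le
  have hVC : V ≤ C := Vsup_le hui hb.le
  have hI : ∀ t, sSup (Vset u i (pt t) (bt t)) * b ≤ V * (b + ε t) := by
    intro t
    apply Vsup_comp hui (hbt0 t) hb (hε0 t)
    intro y hy hle
    have h := dotp_diff_le (p := p) (q := pt t) hy
    have habs : ∑ l, |p l - pt t l| = ∑ l, |pt t l - p l| :=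
      Finset.sum_congr rfl fun l _ => abs_sub_comm _ _
    have hb' : bt t - b ≤ |bt t - b| := le_abs_self _
    rw [habs] at h
    have hεteq : ε t = |bt t - b| + ∑ l, |pt t l - p l| := rfl
    rw [hεteq]
    linarith
  have hII : ∀ t, 0 < bt t → V * bt t ≤ sSup (Vset u i (pt t) (bt t)) * (bt t + ε t) := by
    intro t hbtpos
    apply Vsup_comp hui hb.le hbtpos (hε0 t)
    intro y hy hle
    have h := dotp_diff_le (p := pt t) (q := p) hy
    have hb' : b - bt t ≤ |bt t - b| := by
      have := le_abs_self (b - bt t); rwa [abs_sub_comm] at this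
    have hεteq : ε t = |bt t - b| + ∑ l, |pt t l - p l| := rfl
    rw [hεteq]
    linarith
  -- epsilon-delta finish
  rw [Metric.tendsto_atTop]
  intro δ hδ
  have hden : (0:ℝ) < 2 * C + 2 := by linarith
  have hpos : 0 < δ * b / (2 * C + 2) := by positivity
  obtain ⟨N1, hN1⟩ := (Metric.tendsto_atTop.mp hεconv) (δ * b / (2 * C + 2)) hpos
  obtain ⟨N2, hN2⟩ := (Metric.tendsto_atTop.mp hbtconv) (b / 2) (by positivity)
  refine ⟨max N1 N2, fun t ht => ?_⟩
  have ht1 := hN1 t (le_trans (le_max_left _ _) ht)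
  have ht2 := hN2 t (le_trans (le_max_right _ _) ht)
  rw [Real.dist_eq] at ht1 ht2
  have hεt : ε t < δ * b / (2 * C + 2) := by
    have := le_abs_self (ε t - 0); simp at ht1
    calc ε t ≤ |ε t| := le_abs_self _
      _ < _ := ht1
  have hεt' : ε t * (2 * C + 2) < δ * b := by
    rw [lt_div_iff₀ hden] at hεt; linarith
  have hbtt : b / 2 < bt t := by
    have := abs_lt.mp ht2; linarith [this.1]
  set Vt : ℝ := sSup (Vset u i (pt t) (bt t)) with hVtdef
  have hVt0 : 0 ≤ Vt := Vsup_nonneg hui (hbt0 t)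
  have hVtC : Vt ≤ C := Vsup_le hui (hbt0 t)
  have hbtpos : 0 < bt t := (half_pos hb).trans hbtt
  have h1 : Vt * b ≤ V * (b + ε t) := hI t
  have h2 : V * bt t ≤ Vt * (bt t + ε t) := hII t hbtpos
  have hmul1 : V * ε t ≤ C * ε t := mul_le_mul_of_nonneg_right hVC (hε0 t)
  have hmul2 : Vt * ε t ≤ C * ε t := mul_le_mul_of_nonneg_right hVtC (hε0 t)
  show dist (optVal u i ωi (lamSeq t) (aSeq t)) (optVal u i ωi lamLim aLim) < δ
  rw [hVtform t, hVform, ← hVtdef, Real.dist_eq, abs_sub_lt_iff]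
  clear_value Vt V ε bt pt b p C
  constructor
  · nlinarith [hε0 t, mul_pos hδ hb]
  · have k1 : (V - Vt) * bt t ≤ C * ε t := by nlinarith [h2, hmul2]
    have k2 : C * ε t < δ * b / 2 := by linarith only [hεt', hε0 t]
    have k3 : δ * (b / 2) < δ * bt t := mul_lt_mul_of_pos_left hbtt hδ
    have k4 : (V - Vt) * bt t < δ * bt t := by linarith only [k1, k2, k3]
    exact (mul_lt_mul_iff_left₀ hbtpos).mp k4
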